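/- arXiv:2602.08515 — 4 statements merged into one kernel-verified Lean document; each statement's English description precedes it below -/
import Mathlib

section
/- If σ and σ' are differentiable on ℝ, then for all x t : ℝ, the second partial derivative of the network output with respect to the spatial variable, deriv (deriv (fun s ↦ ũ s t)) x, equals ∑ k, (σ'' (h2 k x t) * (∑ j, σ' (h1 j x t) * W1 0 j * W2 j k)^2 + σ' (h2 k x t) * (∑ j, σ'' (h1 j x t) * (W1 0 j)^2 * W2 j k)) * W3 k. -/
open Real

theorem stmt_2 (m1 m2 : ℕ) (σ : ℝ → ℝ)
    (hσ : Differentiable ℝ σ) (hσ' : Differentiable ℝ (deriv σ))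
    (W1 : Fin 2 → Fin m1 → ℝ) (B1 : Fin m1 → ℝ)
    (W2 : Fin m1 → Fin m2 → ℝ) (B2 : Fin m2 → ℝ)
    (W3 : Fin m2 → ℝ) (B3 : ℝ)
    (h1 : Fin m1 → ℝ → ℝ → ℝ)
    (hh1 : h1 = fun j x t => x * W1 0 j + t * W1 1 j + B1 j)
    (h2 : Fin m2 → ℝ → ℝ → ℝ)
    (hh2 : h2 = fun k x t => (∑ j, σ (h1 j x t) * W2 j k) + B2 k)
    (u : ℝ → ℝ → ℝ)
    (hu : u = fun x t => (∑ k, σ (h2 k x t) * W3 k) + B3) :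
    ∀ x t : ℝ, deriv (deriv (fun s => u s t)) x =
      ∑ k, (deriv (deriv σ) (h2 k x t) * (∑ j, deriv σ (h1 j x t) * W1 0 j * W2 j k) ^ 2
        + deriv σ (h2 k x t) * (∑ j, deriv (deriv σ) (h1 j x t) * (W1 0 j) ^ 2 * W2 j k)) * W3 k := by
  intro x t
  have H1 : ∀ (j : Fin m1) (y : ℝ), HasDerivAt (fun s => h1 j s t) (W1 0 j) y := by
    intro j y
    simp only [hh1]
    simpa using (((hasDerivAt_id y).mul_const (W1 0 j)).add_const (t * W1 1 j)).add_const (B1 j)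
  have Hσ1 : ∀ (j : Fin m1) (y : ℝ), HasDerivAt (fun s => σ (h1 j s t))
      (deriv σ (h1 j y t) * W1 0 j) y :=
    fun j y => ((hσ _).hasDerivAt).comp y (H1 j y)
  have Hσ1' : ∀ (j : Fin m1) (y : ℝ), HasDerivAt (fun s => deriv σ (h1 j s t))
      (deriv (deriv σ) (h1 j y t) * W1 0 j) y :=
    fun j y => ((hσ' _).hasDerivAt).comp y (H1 j y)
  have H2 : ∀ (k : Fin m2) (y : ℝ), HasDerivAt (fun s => h2 k s t)
      (∑ j, deriv σ (h1 j y t) * W1 0 j * W2 j k) y := by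
    intro k y
    simp only [hh2]
    exact (HasDerivAt.fun_sum (fun j _ => (Hσ1 j y).mul_const (W2 j k))).add_const _
  have Hσ2 : ∀ (k : Fin m2) (y : ℝ), HasDerivAt (fun s => σ (h2 k s t))
      (deriv σ (h2 k y t) * ∑ j, deriv σ (h1 j y t) * W1 0 j * W2 j k) y :=
    fun k y => ((hσ _).hasDerivAt).comp y (H2 k y)
  have Hσ2' : ∀ (k : Fin m2) (y : ℝ), HasDerivAt (fun s => deriv σ (h2 k s t))
      (deriv (deriv σ) (h2 k y t) * ∑ j, deriv σ (h1 j y t) * W1 0 j * W2 j k) y :=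
    fun k y => ((hσ' _).hasDerivAt).comp y (H2 k y)
  have Hu : ∀ y : ℝ, HasDerivAt (fun s => u s t)
      (∑ k, deriv σ (h2 k y t) * (∑ j, deriv σ (h1 j y t) * W1 0 j * W2 j k) * W3 k) y := by
    intro y
    simp only [hu]
    exact (HasDerivAt.fun_sum (fun k _ => ((Hσ2 k y).mul_const (W3 k)))).add_const _
  have hderiv : deriv (fun s => u s t)
      = fun y => ∑ k, deriv σ (h2 k y t) * (∑ j, deriv σ (h1 j y t) * W1 0 j * W2 j k) * W3 k :=
    funext fun y => (Hu y).deriv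
  rw [hderiv]
  have Hin : ∀ (k : Fin m2) (y : ℝ),
      HasDerivAt (fun s => ∑ j, deriv σ (h1 j s t) * W1 0 j * W2 j k)
      (∑ j, deriv (deriv σ) (h1 j y t) * W1 0 j * W1 0 j * W2 j k) y :=
    fun k y => HasDerivAt.fun_sum fun j _ => ((Hσ1' j y).mul_const (W1 0 j)).mul_const (W2 j k)
  have Hfin : HasDerivAt
      (fun y => ∑ k, deriv σ (h2 k y t) * (∑ j, deriv σ (h1 j y t) * W1 0 j * W2 j k) * W3 k)
      (∑ k, ((deriv (deriv σ) (h2 k x t) * ∑ j, deriv σ (h1 j x t) * W1 0 j * W2 j k)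
          * (∑ j, deriv σ (h1 j x t) * W1 0 j * W2 j k)
        + deriv σ (h2 k x t) * ∑ j, deriv (deriv σ) (h1 j x t) * W1 0 j * W1 0 j * W2 j k)
        * W3 k) x :=
    HasDerivAt.fun_sum fun k _ => ((Hσ2' k x).mul (Hin k x)).mul_const (W3 k)
  rw [Hfin.deriv]
  refine Finset.sum_congr rfl fun k _ => ?_
  have : (∑ j, deriv (deriv σ) (h1 j x t) * W1 0 j * W1 0 j * W2 j k)
      = ∑ j, deriv (deriv σ) (h1 j x t) * (W1 0 j) ^ 2 * W2 j k :=
    Finset.sum_congr rfl fun j _ => by ring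
  rw [this]
  ring
end

section
/- Suppose σ is differentiable on ℝ. For each k0 : Fin m2 and all x t : ℝ, viewing the network output as a function of the output-layer weight s replacing W3 k0 (all other parameters fixed), the derivative with respect to s of the time derivative of the network output satisfies deriv (fun s ↦ deriv (fun τ ↦ (∑ k, σ (h2 k x τ) * Function.update W3 k0 s k) + B3) t) (W3 k0) = σ' (h2 k0 x t) * (∑ j, σ' (h1 j x t) * W1 1 j * W2 j k0). -/
theorem stmt_12 (m1 m2 : ℕ) (σ : ℝ → ℝ) (hσ : Differentiable ℝ σ)
    (W1 : Fin 2 → Fin m1 → ℝ) (B1 : Fin m1 → ℝ)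
    (W2 : Fin m1 → Fin m2 → ℝ) (B2 : Fin m2 → ℝ)
    (W3 : Fin m2 → ℝ) (B3 : ℝ)
    (h1 : Fin m1 → ℝ → ℝ → ℝ)
    (hh1 : h1 = fun j x t => x * W1 0 j + t * W1 1 j + B1 j)
    (h2 : Fin m2 → ℝ → ℝ → ℝ)
    (hh2 : h2 = fun k x t => (∑ j, σ (h1 j x t) * W2 j k) + B2 k) :
    ∀ (k0 : Fin m2) (x t : ℝ),
      deriv (fun s => deriv
          (fun τ => (∑ k, σ (h2 k x τ) * Function.update W3 k0 s k) + B3) t) (W3 k0) =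
        deriv σ (h2 k0 x t) * (∑ j, deriv σ (h1 j x t) * W1 1 j * W2 j k0) := by
  intro k0 x t
  -- derivative of h1 in τ
  have hd1 : ∀ (j : Fin m1), HasDerivAt (fun τ => h1 j x τ) (W1 1 j) t := by
    intro j
    rw [hh1]
    simpa using (((hasDerivAt_id t).mul_const (W1 1 j)).const_add (x * W1 0 j)).add_const (B1 j)
  have hdσ1 : ∀ (j : Fin m1),
      HasDerivAt (fun τ => σ (h1 j x τ)) (deriv σ (h1 j x t) * W1 1 j) t := by
    intro j
    exact ((hσ (h1 j x t)).hasDerivAt).comp t (hd1 j)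
  set d : Fin m2 → ℝ := fun k => ∑ j, deriv σ (h1 j x t) * W1 1 j * W2 j k with hd
  have hd2 : ∀ (k : Fin m2), HasDerivAt (fun τ => h2 k x τ) (d k) t := by
    intro k
    rw [hh2]
    exact (HasDerivAt.fun_sum (fun j _ => (hdσ1 j).mul_const (W2 j k))).add_const (B2 k)
  set c : Fin m2 → ℝ := fun k => deriv σ (h2 k x t) * d k with hc
  have hdσ2 : ∀ (k : Fin m2),
      HasDerivAt (fun τ => σ (h2 k x τ)) (c k) t := by
    intro k
    exact ((hσ (h2 k x t)).hasDerivAt).comp t (hd2 k)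
  have hinner : ∀ s : ℝ,
      deriv (fun τ => (∑ k, σ (h2 k x τ) * Function.update W3 k0 s k) + B3) t
        = ∑ k, c k * Function.update W3 k0 s k := by
    intro s
    exact ((HasDerivAt.fun_sum (fun k _ =>
      (hdσ2 k).mul_const (Function.update W3 k0 s k))).add_const B3).deriv
  have houter : (fun s => deriv
      (fun τ => (∑ k, σ (h2 k x τ) * Function.update W3 k0 s k) + B3) t)
      = fun s => c k0 * s + ∑ k ∈ Finset.univ.erase k0, c k * W3 k := by
    funext s
    rw [hinner s]
    rw [← Finset.add_sum_erase _ _ (Finset.mem_univ k0), Function.update_self]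
    congr 1
    apply Finset.sum_congr rfl
    intro k hk
    rw [Function.update_of_ne (Finset.ne_of_mem_erase hk)]
  rw [houter]
  have : HasDerivAt (fun s : ℝ => c k0 * s + ∑ k ∈ Finset.univ.erase k0, c k * W3 k)
      (c k0) (W3 k0) := by
    simpa using ((hasDerivAt_id (W3 k0)).const_mul (c k0)).add_const
      (∑ k ∈ Finset.univ.erase k0, c k * W3 k)
  rw [this.deriv]
end

section
/- Suppose σ and σ' are differentiable on ℝ. For each k0 : Fin m2 and all x t : ℝ, the derivative with respect to the second-layer bias B2 k0 of the time derivative of the network output satisfies deriv (fun s ↦ deriv (fun τ ↦ (∑ k, σ ((∑ j, σ (h1 j x τ) * W2 j k) + Function.update B2 k0 s k) * W3 k) + B3) t) (B2 k0) = σ'' (h2 k0 x t) * (∑ j, σ' (h1 j x t) * W1 1 j * W2 j k0) * W3 k0. -/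
theorem stmt_18 (m1 m2 : ℕ) (σ : ℝ → ℝ)
    (hσ : Differentiable ℝ σ) (hσ' : Differentiable ℝ (deriv σ))
    (W1 : Fin 2 → Fin m1 → ℝ) (B1 : Fin m1 → ℝ)
    (W2 : Fin m1 → Fin m2 → ℝ) (B2 : Fin m2 → ℝ)
    (W3 : Fin m2 → ℝ) (B3 : ℝ)
    (h1 : Fin m1 → ℝ → ℝ → ℝ)
    (hh1 : h1 = fun j x t => x * W1 0 j + t * W1 1 j + B1 j)
    (h2 : Fin m2 → ℝ → ℝ → ℝ)
    (hh2 : h2 = fun k x t => (∑ j, σ (h1 j x t) * W2 j k) + B2 k) :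
    ∀ (k0 : Fin m2) (x t : ℝ),
      deriv (fun s => deriv (fun τ =>
          (∑ k, σ ((∑ j, σ (h1 j x τ) * W2 j k) + Function.update B2 k0 s k) * W3 k) + B3) t)
        (B2 k0) =
        deriv (deriv σ) (h2 k0 x t) * (∑ j, deriv σ (h1 j x t) * W1 1 j * W2 j k0) * W3 k0 := by
  subst hh1 hh2
  intro k0 x t
  set c : Fin m2 → ℝ := fun k => ∑ j, σ (x * W1 0 j + t * W1 1 j + B1 j) * W2 j k with hc
  set D : Fin m2 → ℝ :=
    fun k => ∑ j, deriv σ (x * W1 0 j + t * W1 1 j + B1 j) * W1 1 j * W2 j k with hD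
  have hInner : ∀ s : ℝ, HasDerivAt (fun τ =>
      (∑ k, σ ((∑ j, σ (x * W1 0 j + τ * W1 1 j + B1 j) * W2 j k)
          + Function.update B2 k0 s k) * W3 k) + B3)
      (∑ k, deriv σ (c k + Function.update B2 k0 s k) * D k * W3 k) t := by
    intro s
    apply HasDerivAt.add_const
    apply HasDerivAt.fun_sum
    intro k _
    apply HasDerivAt.mul_const
    have hG : HasDerivAt (fun τ =>
        (∑ j, σ (x * W1 0 j + τ * W1 1 j + B1 j) * W2 j k) + Function.update B2 k0 s k)
        (D k) t := by
      apply HasDerivAt.add_const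
      apply HasDerivAt.fun_sum
      intro j _
      have h1d : HasDerivAt (fun τ => x * W1 0 j + τ * W1 1 j + B1 j) (W1 1 j) t := by
        simpa using (((hasDerivAt_id t).mul_const (W1 1 j)).const_add (x * W1 0 j)).add_const
          (B1 j)
      exact (((hσ _).hasDerivAt.comp t h1d)).mul_const (W2 j k)
    exact (hσ _).hasDerivAt.comp t hG
  have hEq : (fun s => deriv (fun τ =>
      (∑ k, σ ((∑ j, σ (x * W1 0 j + τ * W1 1 j + B1 j) * W2 j k)
          + Function.update B2 k0 s k) * W3 k) + B3) t)
      = fun s => ∑ k, deriv σ (c k + Function.update B2 k0 s k) * D k * W3 k :=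
    funext fun s => (hInner s).deriv
  rw [hEq]
  have hOuter : HasDerivAt (fun s => ∑ k, deriv σ (c k + Function.update B2 k0 s k) * D k * W3 k)
      (∑ k, if k = k0 then deriv (deriv σ) (c k0 + B2 k0) * D k0 * W3 k0 else 0) (B2 k0) := by
    apply HasDerivAt.fun_sum
    intro k _
    by_cases hk : k = k0
    · subst hk
      simp only [if_pos rfl, Function.update_self]
      have := (((hσ' _).hasDerivAt.comp (B2 k)
        ((hasDerivAt_id (B2 k)).const_add (c k))).mul_const (D k)).mul_const (W3 k)
      simpa using this
    · simp only [if_neg hk, Function.update_of_ne hk]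
      exact hasDerivAt_const _ _
  rw [hOuter.deriv, Finset.sum_ite_eq' Finset.univ k0
    (fun _ => deriv (deriv σ) (c k0 + B2 k0) * D k0 * W3 k0)]
  simp [hc, hD]
end

section
/- Suppose σ, σ' and σ'' are differentiable on ℝ. For each k0 : Fin m2 and all x t : ℝ, the derivative with respect to the second-layer bias B2 k0 of the second spatial derivative of the network output satisfies deriv (fun s ↦ deriv (deriv (fun ξ ↦ (∑ k, σ ((∑ j, σ (h1 j ξ t) * W2 j k) + Function.update B2 k0 s k) * W3 k) + B3)) x) (B2 k0) = (σ''' (h2 k0 x t) * (∑ j, σ' (h1 j x t) * W1 0 j * W2 j k0)^2 + σ'' (h2 k0 x t) * (∑ j, σ'' (h1 j x t) * (W1 0 j)^2 * W2 j k0)) * W3 k0. -/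
theorem stmt_19 (m1 m2 : ℕ) (σ : ℝ → ℝ)
    (hσ : Differentiable ℝ σ) (hσ' : Differentiable ℝ (deriv σ))
    (hσ'' : Differentiable ℝ (deriv (deriv σ)))
    (W1 : Fin 2 → Fin m1 → ℝ) (B1 : Fin m1 → ℝ)
    (W2 : Fin m1 → Fin m2 → ℝ) (B2 : Fin m2 → ℝ)
    (W3 : Fin m2 → ℝ) (B3 : ℝ)
    (h1 : Fin m1 → ℝ → ℝ → ℝ)
    (hh1 : h1 = fun j x t => x * W1 0 j + t * W1 1 j + B1 j)
    (h2 : Fin m2 → ℝ → ℝ → ℝ)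
    (hh2 : h2 = fun k x t => (∑ j, σ (h1 j x t) * W2 j k) + B2 k) :
    ∀ (k0 : Fin m2) (x t : ℝ),
      deriv (fun s => deriv (deriv (fun ξ =>
          (∑ k, σ ((∑ j, σ (h1 j ξ t) * W2 j k) + Function.update B2 k0 s k) * W3 k) + B3)) x)
        (B2 k0) =
        (deriv (deriv (deriv σ)) (h2 k0 x t)
            * (∑ j, deriv σ (h1 j x t) * W1 0 j * W2 j k0) ^ 2
          + deriv (deriv σ) (h2 k0 x t)
            * (∑ j, deriv (deriv σ) (h1 j x t) * (W1 0 j) ^ 2 * W2 j k0)) * W3 k0 := by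
  intro k0 x t
  -- derivative of h1 in ξ
  have hd1 : ∀ (j : Fin m1) (ξ : ℝ), HasDerivAt (fun ξ => h1 j ξ t) (W1 0 j) ξ := by
    intro j ξ
    simp only [hh1]
    simpa using
      (((hasDerivAt_id ξ).mul_const (W1 0 j)).add_const (t * W1 1 j)).add_const (B1 j)
  -- derivative of the inner sum H k
  have hH : ∀ (k : Fin m2) (ξ : ℝ),
      HasDerivAt (fun ξ => ∑ j, σ (h1 j ξ t) * W2 j k)
        (∑ j, deriv σ (h1 j ξ t) * W1 0 j * W2 j k) ξ := by
    intro k ξ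
    exact HasDerivAt.fun_sum fun j _ =>
      ((hσ (h1 j ξ t)).hasDerivAt.comp ξ (hd1 j ξ)).mul_const (W2 j k)
  -- derivative of A k
  have hA2 : ∀ (k : Fin m2) (ξ : ℝ),
      HasDerivAt (fun ξ => ∑ j, deriv σ (h1 j ξ t) * W1 0 j * W2 j k)
        (∑ j, deriv (deriv σ) (h1 j ξ t) * W1 0 j ^ 2 * W2 j k) ξ := by
    intro k ξ
    have h : HasDerivAt (fun ξ => ∑ j, deriv σ (h1 j ξ t) * W1 0 j * W2 j k)
        (∑ j, deriv (deriv σ) (h1 j ξ t) * W1 0 j * W1 0 j * W2 j k) ξ :=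
      HasDerivAt.fun_sum fun (j : Fin m1) _ =>
        ((by have q := (hσ' (h1 j ξ t)).hasDerivAt.comp ξ (hd1 j ξ); exact q :
          HasDerivAt (fun ξ => deriv σ (h1 j ξ t)) (deriv (deriv σ) (h1 j ξ t) * W1 0 j) ξ).mul_const (W1 0 j)).mul_const (W2 j k)
    have e : (∑ j, deriv (deriv σ) (h1 j ξ t) * W1 0 j ^ 2 * W2 j k)
        = ∑ j, deriv (deriv σ) (h1 j ξ t) * W1 0 j * W1 0 j * W2 j k :=
      Finset.sum_congr rfl fun j _ => by ring
    rw [e]; exact h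
  -- first spatial derivative
  have hF1 : ∀ (s ξ : ℝ),
      deriv (fun ξ => (∑ k, σ ((∑ j, σ (h1 j ξ t) * W2 j k) + Function.update B2 k0 s k) * W3 k) + B3) ξ
      = ∑ k, deriv σ ((∑ j, σ (h1 j ξ t) * W2 j k) + Function.update B2 k0 s k)
          * (∑ j, deriv σ (h1 j ξ t) * W1 0 j * W2 j k) * W3 k := by
    intro s ξ
    exact ((HasDerivAt.fun_sum fun k _ =>
      (((hσ _).hasDerivAt.comp ξ ((hH k ξ).add_const (Function.update B2 k0 s k))).mul_const
        (W3 k))).add_const B3).deriv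
  -- second spatial derivative (pointwise in k, for a fixed constant c)
  have hstep2 : ∀ (c : ℝ) (k : Fin m2) (ξ : ℝ),
      HasDerivAt (fun ξ => deriv σ ((∑ j, σ (h1 j ξ t) * W2 j k) + c)
          * (∑ j, deriv σ (h1 j ξ t) * W1 0 j * W2 j k) * W3 k)
        ((deriv (deriv σ) ((∑ j, σ (h1 j ξ t) * W2 j k) + c)
            * (∑ j, deriv σ (h1 j ξ t) * W1 0 j * W2 j k)
            * (∑ j, deriv σ (h1 j ξ t) * W1 0 j * W2 j k)
          + deriv σ ((∑ j, σ (h1 j ξ t) * W2 j k) + c)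
            * (∑ j, deriv (deriv σ) (h1 j ξ t) * W1 0 j ^ 2 * W2 j k)) * W3 k) ξ := by
    intro c k ξ
    have p1 : HasDerivAt (fun ξ => deriv σ ((∑ j, σ (h1 j ξ t) * W2 j k) + c))
        (deriv (deriv σ) ((∑ j, σ (h1 j ξ t) * W2 j k) + c)
          * (∑ j, deriv σ (h1 j ξ t) * W1 0 j * W2 j k)) ξ :=
      (hσ' _).hasDerivAt.comp ξ ((hH k ξ).add_const c)
    exact (p1.mul (hA2 k ξ)).mul_const (W3 k)
  -- the second spatial derivative of the full network as a function of s
  have hF2 : ∀ s : ℝ,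
      deriv (deriv (fun ξ =>
        (∑ k, σ ((∑ j, σ (h1 j ξ t) * W2 j k) + Function.update B2 k0 s k) * W3 k) + B3)) x
      = ∑ k, (deriv (deriv σ) ((∑ j, σ (h1 j x t) * W2 j k) + Function.update B2 k0 s k)
            * (∑ j, deriv σ (h1 j x t) * W1 0 j * W2 j k)
            * (∑ j, deriv σ (h1 j x t) * W1 0 j * W2 j k)
          + deriv σ ((∑ j, σ (h1 j x t) * W2 j k) + Function.update B2 k0 s k)
            * (∑ j, deriv (deriv σ) (h1 j x t) * W1 0 j ^ 2 * W2 j k)) * W3 k := by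
    intro s
    have e1 : deriv (fun ξ =>
        (∑ k, σ ((∑ j, σ (h1 j ξ t) * W2 j k) + Function.update B2 k0 s k) * W3 k) + B3)
        = fun ξ => ∑ k, deriv σ ((∑ j, σ (h1 j ξ t) * W2 j k) + Function.update B2 k0 s k)
            * (∑ j, deriv σ (h1 j ξ t) * W1 0 j * W2 j k) * W3 k := funext (hF1 s)
    rw [e1]
    exact (HasDerivAt.fun_sum fun k _ => hstep2 (Function.update B2 k0 s k) k x).deriv
  have e2 : (fun s => deriv (deriv (fun ξ =>
        (∑ k, σ ((∑ j, σ (h1 j ξ t) * W2 j k) + Function.update B2 k0 s k) * W3 k) + B3)) x)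
      = fun s => ∑ k, (deriv (deriv σ) ((∑ j, σ (h1 j x t) * W2 j k) + Function.update B2 k0 s k)
            * (∑ j, deriv σ (h1 j x t) * W1 0 j * W2 j k)
            * (∑ j, deriv σ (h1 j x t) * W1 0 j * W2 j k)
          + deriv σ ((∑ j, σ (h1 j x t) * W2 j k) + Function.update B2 k0 s k)
            * (∑ j, deriv (deriv σ) (h1 j x t) * W1 0 j ^ 2 * W2 j k)) * W3 k := funext hF2
  rw [e2]
  -- derivative in s
  have key : HasDerivAt (fun s =>
      ∑ k, (deriv (deriv σ) ((∑ j, σ (h1 j x t) * W2 j k) + Function.update B2 k0 s k)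
            * (∑ j, deriv σ (h1 j x t) * W1 0 j * W2 j k)
            * (∑ j, deriv σ (h1 j x t) * W1 0 j * W2 j k)
          + deriv σ ((∑ j, σ (h1 j x t) * W2 j k) + Function.update B2 k0 s k)
            * (∑ j, deriv (deriv σ) (h1 j x t) * W1 0 j ^ 2 * W2 j k)) * W3 k)
      (∑ k, if k = k0 then
          (deriv (deriv (deriv σ)) ((∑ j, σ (h1 j x t) * W2 j k0) + B2 k0) * 1
            * (∑ j, deriv σ (h1 j x t) * W1 0 j * W2 j k0)
            * (∑ j, deriv σ (h1 j x t) * W1 0 j * W2 j k0)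
          + deriv (deriv σ) ((∑ j, σ (h1 j x t) * W2 j k0) + B2 k0) * 1
            * (∑ j, deriv (deriv σ) (h1 j x t) * W1 0 j ^ 2 * W2 j k0)) * W3 k0
        else 0) (B2 k0) := by
    apply HasDerivAt.fun_sum
    intro k _
    by_cases hk : k = k0
    · subst hk
      simp only [if_pos rfl, Function.update_self]
      have q1 : HasDerivAt (fun s : ℝ => (∑ j, σ (h1 j x t) * W2 j k) + s) 1 (B2 k) := by
        simpa using (hasDerivAt_id (B2 k)).const_add (∑ j, σ (h1 j x t) * W2 j k)
      have q2 := (hσ'' ((∑ j, σ (h1 j x t) * W2 j k) + B2 k)).hasDerivAt.comp (B2 k) q1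
      have q3 := (hσ' ((∑ j, σ (h1 j x t) * W2 j k) + B2 k)).hasDerivAt.comp (B2 k) q1
      exact (((q2.mul_const (∑ j, deriv σ (h1 j x t) * W1 0 j * W2 j k)).mul_const
          (∑ j, deriv σ (h1 j x t) * W1 0 j * W2 j k)).add
        (q3.mul_const (∑ j, deriv (deriv σ) (h1 j x t) * W1 0 j ^ 2 * W2 j k))).mul_const (W3 k)
    · simp only [if_neg hk, Function.update_of_ne hk]
      exact hasDerivAt_const _ _
  rw [key.deriv, Finset.sum_ite_eq' Finset.univ k0]
  simp only [Finset.mem_univ, if_pos, hh2]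
  ring
end
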